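/- Let f : [0,1]^d → ℝ be continuous and let f_n^min, f_n^max be its piecewise-constant lower and upper discretizations on the grid of mesh 1/n. Then min over d-fold stochastic measures μ of ∫ f_n^min dμ ≤ inf over d-fold stochastic measures of ∫ f dμ ≤ min over d-fold stochastic measures of ∫ f_n^max dμ, and both outer quantities converge to the middle infimum as n → ∞. -/

import Mathlib

open MeasureTheory

/-- A probability measure on `ℝ^d` is `d`-fold stochastic if each of its one-dimensional
marginals is the uniform (Lebesgue) measure on `[0,1]`. -/
def IsDFoldStochastic {d : ℕ} (μ : Measure (Fin d → ℝ)) : Prop :=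
  IsProbabilityMeasure μ ∧
    ∀ i : Fin d, μ.map (fun x => x i) = volume.restrict (Set.Icc (0 : ℝ) 1)

/-- The unit cube `[0,1]^d`. -/
def unitCube (d : ℕ) : Set (Fin d → ℝ) :=
  Set.univ.pi fun _ => Set.Icc (0 : ℝ) 1

/-- The closed grid cube of mesh `1/n` containing the point `x ∈ [0,1]^d`. -/
def cubeOf (d n : ℕ) (x : Fin d → ℝ) : Set (Fin d → ℝ) :=
  Set.univ.pi fun k =>
    Set.Icc ((min ⌊x k * n⌋₊ (n - 1) : ℕ) / n : ℝ)
      (((min ⌊x k * n⌋₊ (n - 1) : ℕ) + 1) / n)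

section Helpers

open Set Filter

lemma isCompact_unitCube (d : ℕ) : IsCompact (unitCube d) :=
  isCompact_univ_pi fun _ => isCompact_Icc

lemma measurableSet_unitCube (d : ℕ) : MeasurableSet (unitCube d) :=
  MeasurableSet.univ_pi fun _ => measurableSet_Icc

lemma cubeOf_subset {d n : ℕ} (hn : 0 < n) (x : Fin d → ℝ) :
    cubeOf d n x ⊆ unitCube d := by
  intro y hy k _
  have hk := hy k (mem_univ k)
  simp only [mem_Icc] at hk ⊢
  have hnpos : (0:ℝ) < n := by exact_mod_cast hn
  constructor
  · have h0 : (0:ℝ) ≤ (min ⌊x k * n⌋₊ (n-1) : ℕ) / n := by positivity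
    linarith [hk.1]
  · have h1 : min ⌊x k * n⌋₊ (n-1) + 1 ≤ n := by omega
    have h2 : ((min ⌊x k * n⌋₊ (n-1) : ℕ) : ℝ) + 1 ≤ n := by exact_mod_cast h1
    calc y k ≤ ((min ⌊x k * n⌋₊ (n-1) : ℕ) + 1) / n := hk.2
      _ ≤ (n:ℝ)/n := by gcongr
      _ = 1 := div_self hnpos.ne'

lemma mem_cubeOf {d n : ℕ} (hn : 0 < n) {x : Fin d → ℝ} (hx : x ∈ unitCube d) :
    x ∈ cubeOf d n x := by
  intro k _
  have hxk := hx k (mem_univ k)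
  simp only [mem_Icc] at hxk ⊢
  have hnpos : (0:ℝ) < n := by exact_mod_cast hn
  have ht0 : 0 ≤ x k * n := mul_nonneg hxk.1 hnpos.le
  constructor
  · rw [div_le_iff₀ hnpos]
    calc ((min ⌊x k * n⌋₊ (n-1) : ℕ) : ℝ) ≤ (⌊x k * n⌋₊ : ℝ) := by
          exact_mod_cast min_le_left _ _
      _ ≤ x k * n := Nat.floor_le ht0
  · rw [le_div_iff₀ hnpos]
    rcases le_or_gt (⌊x k * n⌋₊) (n-1) with h | h
    · have hmin : min ⌊x k * n⌋₊ (n-1) = ⌊x k * n⌋₊ := min_eq_left h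
      rw [hmin]
      have := Nat.lt_floor_add_one (x k * n)
      linarith
    · have hmin : min ⌊x k * n⌋₊ (n-1) = n - 1 := min_eq_right (by omega)
      rw [hmin]
      have h1 : ((n-1 : ℕ) : ℝ) + 1 = n := by
        have : (n-1) + 1 = n := by omega
        exact_mod_cast this
      rw [h1]
      calc x k * n ≤ 1 * n := by gcongr; exact hxk.2
        _ = n := one_mul _

lemma dist_le_of_mem_cubeOf {d n : ℕ} (hn : 0 < n) {x y z : Fin d → ℝ}
    (hy : y ∈ cubeOf d n x) (hz : z ∈ cubeOf d n x) : dist y z ≤ 1 / n := by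
  have hnpos : (0:ℝ) < n := by exact_mod_cast hn
  rw [dist_pi_le_iff (by positivity)]
  intro k
  have h1 := hy k (mem_univ k)
  have h2 := hz k (mem_univ k)
  calc dist (y k) (z k) ≤ ((min ⌊x k * n⌋₊ (n-1) : ℕ) + 1) / n
        - (min ⌊x k * n⌋₊ (n-1) : ℕ) / n := Real.dist_le_of_mem_Icc h1 h2
    _ = 1 / n := by ring

lemma isCompact_cubeOf (d n : ℕ) (x : Fin d → ℝ) : IsCompact (cubeOf d n x) :=
  isCompact_univ_pi fun _ => isCompact_Icc

lemma measurable_discretization {d n : ℕ} (f : (Fin d → ℝ) → ℝ)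
    (g : Set ℝ → ℝ) : Measurable (fun x => g (f '' cubeOf d n x)) := by
  have hg : Measurable (fun c : Fin d → ℕ => g (f '' (Set.univ.pi fun k =>
        Set.Icc ((min (c k) (n - 1) : ℕ) / n : ℝ) (((min (c k) (n - 1) : ℕ) + 1) / n)))) :=
    measurable_of_countable _
  have hfl : Measurable (fun (x : Fin d → ℝ) (k : Fin d) => ⌊x k * n⌋₊) :=
    measurable_pi_lambda _ fun k =>
      Nat.measurable_floor.comp ((measurable_pi_apply k).mul_const _)
  exact hg.comp hfl

noncomputable def mu0 (d : ℕ) : Measure (Fin d → ℝ) :=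
  Measure.pi fun _ => volume.restrict (Set.Icc (0:ℝ) 1)

instance (d : ℕ) : IsProbabilityMeasure (mu0 d) := by
  haveI : IsProbabilityMeasure (volume.restrict (Set.Icc (0:ℝ) 1)) :=
    ⟨by simp [Real.volume_Icc]⟩
  unfold mu0; infer_instance

lemma mu0_marginal (d : ℕ) (i : Fin d) :
    (mu0 d).map (fun x => x i) = volume.restrict (Set.Icc (0:ℝ) 1) := by
  haveI hprob : IsProbabilityMeasure (volume.restrict (Set.Icc (0:ℝ) 1)) :=
    ⟨by simp [Real.volume_Icc]⟩
  ext s hs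
  rw [Measure.map_apply (measurable_pi_apply i) hs]
  have h1 : (fun x : Fin d → ℝ => x i) ⁻¹' s =
      Set.univ.pi (Function.update (fun _ => Set.univ) i s) := Set.eval_preimage
  rw [h1, mu0, Measure.pi_pi]
  rw [Finset.prod_eq_single i
    (fun j _ hj => by simp [Function.update_of_ne hj])
    (by simp)]
  simp

lemma mu0_stochastic (d : ℕ) : IsDFoldStochastic (mu0 d) :=
  ⟨inferInstance, mu0_marginal d⟩

lemma stochastic_cube_one {d : ℕ} {μ : Measure (Fin d → ℝ)}
    (hμ : IsDFoldStochastic μ) : μ (unitCube d) = 1 := by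
  obtain ⟨hp, hm⟩ := hμ
  haveI := hp
  have h1 : ∀ i : Fin d, μ ((fun x : Fin d → ℝ => x i) ⁻¹' (Set.Icc (0:ℝ) 1)ᶜ) = 0 := by
    intro i
    have h2 : μ.map (fun x => x i) ((Set.Icc (0:ℝ) 1)ᶜ) = 0 := by
      rw [hm i, Measure.restrict_apply measurableSet_Icc.compl]
      simp
    rwa [Measure.map_apply (measurable_pi_apply i) measurableSet_Icc.compl] at h2
  have hcompl : μ (unitCube d)ᶜ = 0 := by
    have hsub : (unitCube d)ᶜ ⊆ ⋃ i, (fun x : Fin d → ℝ => x i) ⁻¹' (Set.Icc (0:ℝ) 1)ᶜ := by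
      intro x hx
      simp only [unitCube, mem_compl_iff, Set.mem_pi, mem_univ, forall_true_left,
        not_forall] at hx
      obtain ⟨i, hi⟩ := hx
      exact Set.mem_iUnion.2 ⟨i, hi⟩
    exact measure_mono_null hsub (measure_iUnion_null h1)
  have h3 := measure_add_measure_compl (μ := μ) (measurableSet_unitCube d)
  rw [hcompl, add_zero, measure_univ] at h3
  exact h3

end Helpers

/-- For continuous `f` on `[0,1]^d` with grid discretizations `f_n^min ≤ f ≤ f_n^max`, the
optimal values `min_μ ∫ f_n^min dμ` and `min_μ ∫ f_n^max dμ` over `d`-fold stochastic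
measures sandwich `inf_μ ∫ f dμ` and both converge to it as `n → ∞`. -/
theorem stmt10 {d : ℕ} (f : (Fin d → ℝ) → ℝ) (hf : ContinuousOn f (unitCube d))
    (fmax fmin : ℕ → (Fin d → ℝ) → ℝ)
    (hmax : ∀ n x, fmax n x = sSup (f '' cubeOf d n x))
    (hmin : ∀ n x, fmin n x = sInf (f '' cubeOf d n x)) :
    (∀ n, 0 < n →
      sInf {v : ℝ | ∃ μ : Measure (Fin d → ℝ),
          IsDFoldStochastic μ ∧ v = ∫ x in unitCube d, fmin n x ∂μ}
        ≤ sInf {v : ℝ | ∃ μ : Measure (Fin d → ℝ),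
          IsDFoldStochastic μ ∧ v = ∫ x in unitCube d, f x ∂μ} ∧
      sInf {v : ℝ | ∃ μ : Measure (Fin d → ℝ),
          IsDFoldStochastic μ ∧ v = ∫ x in unitCube d, f x ∂μ}
        ≤ sInf {v : ℝ | ∃ μ : Measure (Fin d → ℝ),
          IsDFoldStochastic μ ∧ v = ∫ x in unitCube d, fmax n x ∂μ}) ∧
    Filter.Tendsto (fun n : ℕ =>
        sInf {v : ℝ | ∃ μ : Measure (Fin d → ℝ),
          IsDFoldStochastic μ ∧ v = ∫ x in unitCube d, fmin n x ∂μ})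
      Filter.atTop
      (nhds (sInf {v : ℝ | ∃ μ : Measure (Fin d → ℝ),
          IsDFoldStochastic μ ∧ v = ∫ x in unitCube d, f x ∂μ})) ∧
    Filter.Tendsto (fun n : ℕ =>
        sInf {v : ℝ | ∃ μ : Measure (Fin d → ℝ),
          IsDFoldStochastic μ ∧ v = ∫ x in unitCube d, fmax n x ∂μ})
      Filter.atTop
      (nhds (sInf {v : ℝ | ∃ μ : Measure (Fin d → ℝ),
          IsDFoldStochastic μ ∧ v = ∫ x in unitCube d, f x ∂μ})) := by
  classical
  obtain ⟨C0, hC0⟩ := (isCompact_unitCube d).exists_bound_of_continuousOn hf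
  set C := max C0 0 with hCdef
  have hC : ∀ x ∈ unitCube d, |f x| ≤ C := fun x hx => by
    have := hC0 x hx
    rw [Real.norm_eq_abs] at this
    exact this.trans (le_max_left _ _)
  have hCnn : (0:ℝ) ≤ C := le_max_right _ _
  -- pointwise facts
  have hpt : ∀ n, 0 < n → ∀ x ∈ unitCube d,
      fmin n x ≤ f x ∧ f x ≤ fmax n x ∧ |fmin n x| ≤ C ∧ |fmax n x| ≤ C := by
    intro n hn x hx
    have hsub := cubeOf_subset hn x
    have hK : IsCompact (f '' cubeOf d n x) :=
      (isCompact_cubeOf d n x).image_of_continuousOn (hf.mono hsub)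
    have hmem : f x ∈ f '' cubeOf d n x := ⟨x, mem_cubeOf hn hx, rfl⟩
    have hne : (f '' cubeOf d n x).Nonempty := ⟨f x, hmem⟩
    refine ⟨?_, ?_, ?_, ?_⟩
    · rw [hmin]; exact csInf_le hK.bddBelow hmem
    · rw [hmax]; exact le_csSup hK.bddAbove hmem
    · rw [hmin]
      obtain ⟨a, ha, hfa⟩ := hK.sInf_mem hne
      rw [← hfa]; exact hC a (hsub ha)
    · rw [hmax]
      obtain ⟨a, ha, hfa⟩ := hK.sSup_mem hne
      rw [← hfa]; exact hC a (hsub ha)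
  -- uniform estimate
  have hunif : ∀ ε : ℝ, 0 < ε → ∃ N : ℕ, 0 < N ∧ ∀ n, N ≤ n → ∀ x ∈ unitCube d,
      fmax n x ≤ fmin n x + ε := by
    intro ε hε
    have huc := (isCompact_unitCube d).uniformContinuousOn_of_continuous hf
    rw [Metric.uniformContinuousOn_iff] at huc
    obtain ⟨δ, hδ, hδ'⟩ := huc ε hε
    obtain ⟨N, hN⟩ := exists_nat_gt (1/δ)
    refine ⟨N + 1, Nat.succ_pos _, fun n hn x hx => ?_⟩
    have hn0 : 0 < n := lt_of_lt_of_le (Nat.succ_pos N) hn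
    have hnR : (0:ℝ) < n := by exact_mod_cast hn0
    have h1n : (1:ℝ)/n < δ := by
      have hlt : (1:ℝ)/δ < n := by
        refine lt_of_lt_of_le hN ?_
        exact_mod_cast le_trans (Nat.le_succ N) hn
      have := one_div_lt_one_div_of_lt (by positivity) hlt
      rwa [one_div_one_div] at this
    have hsub := cubeOf_subset hn0 x
    have hK : IsCompact (f '' cubeOf d n x) :=
      (isCompact_cubeOf d n x).image_of_continuousOn (hf.mono hsub)
    have hmem : f x ∈ f '' cubeOf d n x := ⟨x, mem_cubeOf hn0 hx, rfl⟩
    have hne : (f '' cubeOf d n x).Nonempty := ⟨f x, hmem⟩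
    rw [hmax, hmin]
    obtain ⟨b0, hb0, hfb0⟩ := hK.sInf_mem hne
    apply csSup_le hne
    rintro b ⟨a, ha, rfl⟩
    have hd := dist_le_of_mem_cubeOf hn0 ha hb0
    have hδa := hδ' a (hsub ha) b0 (hsub hb0) (lt_of_le_of_lt hd h1n)
    rw [Real.dist_eq] at hδa
    have := abs_lt.mp hδa
    rw [← hfb0]
    linarith [this.1, this.2]
  -- measurability
  have hmeasmin : ∀ n, Measurable (fmin n) := by
    intro n
    have h : fmin n = fun x => sInf (f '' cubeOf d n x) := funext (hmin n)
    rw [h]; exact measurable_discretization f sInf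
  have hmeasmax : ∀ n, Measurable (fmax n) := by
    intro n
    have h : fmax n = fun x => sSup (f '' cubeOf d n x) := funext (hmax n)
    rw [h]; exact measurable_discretization f sSup
  -- integrability
  have hintOn : ∀ (g : (Fin d → ℝ) → ℝ) (μ : Measure (Fin d → ℝ)), IsDFoldStochastic μ →
      Measurable g → (∀ x ∈ unitCube d, |g x| ≤ C) → IntegrableOn g (unitCube d) μ := by
    intro g μ hμ hg hbd
    haveI := hμ.1
    exact (integrable_const C).mono' hg.aestronglyMeasurable
      ((ae_restrict_iff' (measurableSet_unitCube d)).2 (Filter.Eventually.of_forall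
        fun x hx => by rw [Real.norm_eq_abs]; exact hbd x hx))
  have hint_f : ∀ (μ : Measure (Fin d → ℝ)), IsDFoldStochastic μ →
      IntegrableOn f (unitCube d) μ := by
    intro μ hμ
    haveI := hμ.1
    exact hf.integrableOn_compact (isCompact_unitCube d)
  -- nonemptiness and boundedness of value sets
  have hSne : ∀ g : (Fin d → ℝ) → ℝ,
      {v : ℝ | ∃ μ : Measure (Fin d → ℝ), IsDFoldStochastic μ ∧
        v = ∫ x in unitCube d, g x ∂μ}.Nonempty :=
    fun g => ⟨_, mu0 d, mu0_stochastic d, rfl⟩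
  have hSbdd : ∀ g : (Fin d → ℝ) → ℝ, (∀ x ∈ unitCube d, |g x| ≤ C) →
      BddBelow {v : ℝ | ∃ μ : Measure (Fin d → ℝ), IsDFoldStochastic μ ∧
        v = ∫ x in unitCube d, g x ∂μ} := by
    intro g hg
    refine ⟨-C, ?_⟩
    rintro v ⟨μ, hμ, rfl⟩
    haveI := hμ.1
    have hb := norm_setIntegral_le_of_norm_le_const (μ := μ) (s := unitCube d) (C := C)
      (measure_lt_top μ _)
      (fun x hx => by rw [Real.norm_eq_abs]; exact hg x hx)
    have h2 : (μ (unitCube d)).toReal = 1 := by rw [stochastic_cube_one hμ]; simp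
    rw [Real.norm_eq_abs, measureReal_def, h2, mul_one] at hb
    linarith [(abs_le.mp hb).1]
  -- comparison of infima
  have hinf_le : ∀ (g h : (Fin d → ℝ) → ℝ) (c : ℝ),
      BddBelow {v : ℝ | ∃ μ : Measure (Fin d → ℝ), IsDFoldStochastic μ ∧
        v = ∫ x in unitCube d, g x ∂μ} →
      (∀ μ : Measure (Fin d → ℝ), IsDFoldStochastic μ →
        (∫ x in unitCube d, g x ∂μ) ≤ (∫ x in unitCube d, h x ∂μ) + c) →
      sInf {v : ℝ | ∃ μ : Measure (Fin d → ℝ), IsDFoldStochastic μ ∧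
        v = ∫ x in unitCube d, g x ∂μ}
        ≤ sInf {v : ℝ | ∃ μ : Measure (Fin d → ℝ), IsDFoldStochastic μ ∧
        v = ∫ x in unitCube d, h x ∂μ} + c := by
    intro g h c hbdd hcomp
    have h1 : sInf {v : ℝ | ∃ μ : Measure (Fin d → ℝ), IsDFoldStochastic μ ∧
        v = ∫ x in unitCube d, g x ∂μ} - c ≤
        sInf {v : ℝ | ∃ μ : Measure (Fin d → ℝ), IsDFoldStochastic μ ∧
        v = ∫ x in unitCube d, h x ∂μ} := by
      apply le_csInf (hSne h)
      rintro b ⟨μ, hμ, rfl⟩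
      have h2 : sInf {v : ℝ | ∃ μ : Measure (Fin d → ℝ), IsDFoldStochastic μ ∧
          v = ∫ x in unitCube d, g x ∂μ} ≤ ∫ x in unitCube d, g x ∂μ :=
        csInf_le hbdd ⟨μ, hμ, rfl⟩
      linarith [hcomp μ hμ]
    linarith
  -- integral comparisons
  have hcomp1 : ∀ n, 0 < n → ∀ μ : Measure (Fin d → ℝ), IsDFoldStochastic μ →
      (∫ x in unitCube d, fmin n x ∂μ) ≤ ∫ x in unitCube d, f x ∂μ := by
    intro n hn μ hμ
    exact setIntegral_mono_on
      (hintOn (fmin n) μ hμ (hmeasmin n) (fun x hx => (hpt n hn x hx).2.2.1))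
      (hint_f μ hμ) (measurableSet_unitCube d) (fun x hx => (hpt n hn x hx).1)
  have hcomp2 : ∀ n, 0 < n → ∀ μ : Measure (Fin d → ℝ), IsDFoldStochastic μ →
      (∫ x in unitCube d, f x ∂μ) ≤ ∫ x in unitCube d, fmax n x ∂μ := by
    intro n hn μ hμ
    exact setIntegral_mono_on (hint_f μ hμ)
      (hintOn (fmax n) μ hμ (hmeasmax n) (fun x hx => (hpt n hn x hx).2.2.2))
      (measurableSet_unitCube d) (fun x hx => (hpt n hn x hx).2.1)
  have hcomp3 : ∀ ε : ℝ, 0 < ε → ∃ N : ℕ, 0 < N ∧ ∀ n, N ≤ n →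
      ∀ μ : Measure (Fin d → ℝ), IsDFoldStochastic μ →
      (∫ x in unitCube d, fmax n x ∂μ) ≤ (∫ x in unitCube d, fmin n x ∂μ) + ε := by
    intro ε hε
    obtain ⟨N, hN0, hN⟩ := hunif ε hε
    refine ⟨N, hN0, fun n hn μ hμ => ?_⟩
    haveI := hμ.1
    have hn0 : 0 < n := lt_of_lt_of_le hN0 hn
    have hintmin := hintOn (fmin n) μ hμ (hmeasmin n) (fun x hx => (hpt n hn0 x hx).2.2.1)
    have h1 : (∫ x in unitCube d, fmax n x ∂μ) ≤ ∫ x in unitCube d, (fmin n x + ε) ∂μ := by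
      refine setIntegral_mono_on
        (hintOn (fmax n) μ hμ (hmeasmax n) (fun x hx => (hpt n hn0 x hx).2.2.2))
        (hintmin.add (integrableOn_const (measure_ne_top μ _) (by simp)))
        (measurableSet_unitCube d) (fun x hx => hN n hn x hx)
    have h2 : (∫ x in unitCube d, (fmin n x + ε) ∂μ)
        = (∫ x in unitCube d, fmin n x ∂μ) + ε := by
      rw [integral_add hintmin (integrable_const ε), setIntegral_const, measureReal_def,
        stochastic_cube_one hμ]
      simp
    linarith
  -- bddBelow instances
  have hbddmin : ∀ n, 0 < n → BddBelow {v : ℝ | ∃ μ : Measure (Fin d → ℝ),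
      IsDFoldStochastic μ ∧ v = ∫ x in unitCube d, fmin n x ∂μ} :=
    fun n hn => hSbdd (fmin n) (fun x hx => (hpt n hn x hx).2.2.1)
  have hbddmax : ∀ n, 0 < n → BddBelow {v : ℝ | ∃ μ : Measure (Fin d → ℝ),
      IsDFoldStochastic μ ∧ v = ∫ x in unitCube d, fmax n x ∂μ} :=
    fun n hn => hSbdd (fmax n) (fun x hx => (hpt n hn x hx).2.2.2)
  have hbddf : BddBelow {v : ℝ | ∃ μ : Measure (Fin d → ℝ),
      IsDFoldStochastic μ ∧ v = ∫ x in unitCube d, f x ∂μ} := hSbdd f hC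
  have part1 : ∀ n, 0 < n →
      sInf {v : ℝ | ∃ μ : Measure (Fin d → ℝ),
          IsDFoldStochastic μ ∧ v = ∫ x in unitCube d, fmin n x ∂μ}
        ≤ sInf {v : ℝ | ∃ μ : Measure (Fin d → ℝ),
          IsDFoldStochastic μ ∧ v = ∫ x in unitCube d, f x ∂μ} ∧
      sInf {v : ℝ | ∃ μ : Measure (Fin d → ℝ),
          IsDFoldStochastic μ ∧ v = ∫ x in unitCube d, f x ∂μ}
        ≤ sInf {v : ℝ | ∃ μ : Measure (Fin d → ℝ),
          IsDFoldStochastic μ ∧ v = ∫ x in unitCube d, fmax n x ∂μ} := by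
    intro n hn
    constructor
    · have := hinf_le (fmin n) f 0 (hbddmin n hn)
        (fun μ hμ => by simpa using hcomp1 n hn μ hμ)
      simpa using this
    · have := hinf_le f (fmax n) 0 hbddf
        (fun μ hμ => by simpa using hcomp2 n hn μ hμ)
      simpa using this
  refine ⟨part1, ?_, ?_⟩
  · rw [Metric.tendsto_atTop]
    intro ε hε
    obtain ⟨N, hN0, hN⟩ := hcomp3 (ε/2) (by linarith)
    refine ⟨N, fun n hn => ?_⟩
    have hn0 : 0 < n := lt_of_lt_of_le hN0 hn
    have h1 := (part1 n hn0).1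
    have h2 := (part1 n hn0).2
    have h3 := hinf_le (fmax n) (fmin n) (ε/2) (hbddmax n hn0) (fun μ hμ => hN n hn μ hμ)
    rw [Real.dist_eq, abs_lt]
    constructor <;> linarith
  · rw [Metric.tendsto_atTop]
    intro ε hε
    obtain ⟨N, hN0, hN⟩ := hcomp3 (ε/2) (by linarith)
    refine ⟨N, fun n hn => ?_⟩
    have hn0 : 0 < n := lt_of_lt_of_le hN0 hn
    have h1 := (part1 n hn0).1
    have h2 := (part1 n hn0).2
    have h3 := hinf_le (fmax n) (fmin n) (ε/2) (hbddmax n hn0) (fun μ hμ => hN n hn μ hμ)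
    rw [Real.dist_eq, abs_lt]
    constructor <;> linarith
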